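/- Let p be a probability-distribution matrix with coupling polynomial f and reflected polynomial f̄. Then the sum, over all tuples x₁,x₂,x₃,y₁,y₂,y₃ ∈ {0,…,m} and u₁,u₂,u₃,v₁,v₂,v₃ ∈ {0,…,M−1} satisfying (x₁+x₂+x₃) − (y₁+y₂+y₃) = 0 in ℤ and M ∣ (u₁+u₂+u₃) − (v₁+v₂+v₃), of the product p(x₁,u₁)·p(x₂,u₂)·p(x₃,u₃)·p(y₁,v₁)·p(y₂,v₂)·p(y₃,v₃), equals Σ_{b ∈ ℤ, M ∣ b} [f³ · f̄³]_{(0,b)}. (This is the quantity P₆(p), the probability that a cycle-6 candidate in the base matrix remains a cycle-6 candidate in the MD protograph under random partitioning and relocations according to p.) -/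

import Mathlib

/-- `f_a`: the Laurent polynomial `Σ_{i,j} p(i,j) X^{a·i} Y^{a·j}` in the monoid algebra
`AddMonoidAlgebra ℝ (ℤ × ℤ)`; `fpa p 1` is the coupling polynomial `f` and
`fpa p (-1)` is the reflected polynomial `f̄`. -/
noncomputable def fpa {m M : ℕ} (p : Fin (m + 1) × Fin M → ℝ) (a : ℤ) :
    AddMonoidAlgebra ℝ (ℤ × ℤ) :=
  ∑ ij : Fin (m + 1) × Fin M,
    AddMonoidAlgebra.single (a * (ij.1 : ℤ), a * (ij.2 : ℤ)) (p ij)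

/-- `Σ_{b ∈ ℤ, M ∣ b} [g]_{(0,b)}`. -/
noncomputable def divCoeffSum (M : ℕ) (g : AddMonoidAlgebra ℝ (ℤ × ℤ)) : ℝ :=
  ∑ᶠ (b : ℤ) (_ : (M : ℤ) ∣ b), g.coeff (0, b)

open Classical in
lemma divCoeffSum_eq (M : ℕ) (g : AddMonoidAlgebra ℝ (ℤ × ℤ)) :
    divCoeffSum M g = ∑ᶠ b : ℤ, if (M : ℤ) ∣ b then g.coeff (0, b) else 0 := by
  unfold divCoeffSum
  congr 1; funext b; exact finsum_eq_if

open Classical in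
lemma support_fin (M : ℕ) (g : AddMonoidAlgebra ℝ (ℤ × ℤ)) :
    (Function.support fun b : ℤ => if (M : ℤ) ∣ b then g.coeff (0, b) else 0).Finite := by
  apply Set.Finite.subset (g.coeff.support.image Prod.snd).finite_toSet
  intro b hb
  simp only [Function.mem_support] at hb
  have : g.coeff (0, b) ≠ 0 := by intro h; apply hb; simp [h]
  simp only [Finset.coe_image, Set.mem_image, Finset.mem_coe, Finsupp.mem_support_iff]
  exact ⟨(0, b), this, rfl⟩

lemma divCoeffSum_add (M : ℕ) (g h : AddMonoidAlgebra ℝ (ℤ × ℤ)) :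
    divCoeffSum M (g + h) = divCoeffSum M g + divCoeffSum M h := by
  classical
  rw [divCoeffSum_eq, divCoeffSum_eq, divCoeffSum_eq, ← finsum_add_distrib (support_fin M g) (support_fin M h)]
  congr 1; funext b
  split_ifs <;> simp [AddMonoidAlgebra.coeff_add, Finsupp.add_apply (g₁ := g.coeff) (g₂ := h.coeff)]

noncomputable def dcs (M : ℕ) : AddMonoidAlgebra ℝ (ℤ × ℤ) →+ ℝ where
  toFun := divCoeffSum M
  map_zero' := by simp [divCoeffSum]
  map_add' := divCoeffSum_add M

lemma divCoeffSum_single (M : ℕ) (s t : ℤ) (c : ℝ) :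
    divCoeffSum M (AddMonoidAlgebra.single (s, t) c) =
      if s = 0 ∧ (M : ℤ) ∣ t then c else 0 := by
  classical
  rw [divCoeffSum_eq]
  rw [finsum_eq_single _ t]
  · by_cases hs : s = 0
    · subst hs
      by_cases hd : (M : ℤ) ∣ t <;> simp [hd, AddMonoidAlgebra.coeff_single, Finsupp.single_apply]
    · have : ((s, t) : ℤ × ℤ) ≠ (0, t) := by simp [Prod.ext_iff, hs]
      simp [AddMonoidAlgebra.coeff_single, Finsupp.single_apply, this, hs]
  · intro b hb
    have : ((s, t) : ℤ × ℤ) ≠ (0, b) := by simp [Prod.ext_iff]; intro; omega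
    simp [AddMonoidAlgebra.coeff_single, Finsupp.single_apply, this]

lemma fpa_pow3 {m M : ℕ} (p : Fin (m + 1) × Fin M → ℝ) (a : ℤ) :
    fpa p a ^ 3 = ∑ w : Fin 3 → Fin (m + 1) × Fin M,
      AddMonoidAlgebra.single (∑ k : Fin 3, a * ((w k).1 : ℤ), ∑ k : Fin 3, a * ((w k).2 : ℤ))
        (∏ k : Fin 3, p (w k)) := by
  have h1 : fpa p a ^ 3 = ∏ _k : Fin 3, fpa p a := by
    simp [Finset.prod_const]
  rw [h1]
  unfold fpa
  rw [Finset.prod_univ_sum]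
  rw [Fintype.piFinset_univ]
  refine Finset.sum_congr rfl fun w _ => ?_
  rw [AddMonoidAlgebra.prod_single]
  congr 1

open Classical in
/-- the expression `P₆(p)` for the probability that a cycle-6 candidate
survives random partitioning and relocations. -/
theorem stmt0 {m M : ℕ} (hm : 1 ≤ m) (hM : 2 ≤ M)
    (p : Fin (m + 1) × Fin M → ℝ) (hp0 : ∀ ij, 0 ≤ p ij)
    (hp1 : ∑ ij : Fin (m + 1) × Fin M, p ij = 1) :
    (∑ x : Fin 3 → Fin (m + 1), ∑ y : Fin 3 → Fin (m + 1),
      ∑ u : Fin 3 → Fin M, ∑ v : Fin 3 → Fin M,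
        if (∑ k : Fin 3, (((x k : ℤ)) - ((y k : ℤ))) = 0 ∧
            (M : ℤ) ∣ ∑ k : Fin 3, (((u k : ℤ)) - ((v k : ℤ)))) then
          (∏ k : Fin 3, p (x k, u k)) * ∏ k : Fin 3, p (y k, v k)
        else 0) =
    divCoeffSum M ((fpa p 1) ^ 3 * (fpa p (-1)) ^ 3) := by
  rw [fpa_pow3, fpa_pow3, Finset.sum_mul_sum]
  have hdcs : ∀ g, divCoeffSum M g = dcs M g := fun _ => rfl
  rw [hdcs, map_sum]
  simp only [map_sum, AddMonoidAlgebra.single_mul_single, Prod.mk_add_mk]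
  have hsingle : ∀ (s t : ℤ) (c : ℝ),
      dcs M (AddMonoidAlgebra.single (s, t) c) = if s = 0 ∧ (M : ℤ) ∣ t then c else 0 :=
    fun s t c => divCoeffSum_single M s t c
  simp only [hsingle]
  have h2 : ∀ (F : (Fin 3 → Fin (m + 1) × Fin M) → ℝ),
      ∑ w : Fin 3 → Fin (m + 1) × Fin M, F w =
        ∑ x : Fin 3 → Fin (m + 1), ∑ u : Fin 3 → Fin M, F (fun k => (x k, u k)) := by
    intro F
    rw [← Equiv.sum_comp (Equiv.arrowProdEquivProdArrow (Fin 3) (fun _ => Fin (m + 1)) (fun _ => Fin M)).symm F,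
      Fintype.sum_prod_type]
    rfl
  simp only [h2]
  refine Finset.sum_congr rfl fun x _ => ?_
  rw [Finset.sum_comm]
  refine Finset.sum_congr rfl fun u _ => ?_
  refine Finset.sum_congr rfl fun y _ => ?_
  refine Finset.sum_congr rfl fun v _ => ?_
  congr 1
  simp only [eq_iff_iff, one_mul, neg_mul, Finset.sum_neg_distrib, Finset.sum_sub_distrib,
    sub_eq_add_neg, Finset.sum_add_distrib]
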